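/- The figure L = {(x,0) ∈ ℝ² : x ≥ 0} ∪ {(0,1)} is strongly good; in fact, the only surjective isometry f : ℝ² → ℝ² with f(L) ⊆ L is the identity, so f(L) = L. -/

import Mathlib

open Set Function

abbrev Plane := EuclideanSpace ℝ (Fin 2)

/-- Geometric equality: some surjective isometry of the plane maps `S₁` onto `S₂`. -/
def GeomEq (S₁ S₂ : Set Plane) : Prop :=
  ∃ f : Plane → Plane, Isometry f ∧ Function.Surjective f ∧ f '' S₁ = S₂

/-- `S₁` is equal to or smaller than `S₂`: some surjective isometry maps `S₁` into `S₂`. -/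
def GeomLe (S₁ S₂ : Set Plane) : Prop :=
  ∃ f : Plane → Plane, Isometry f ∧ Function.Surjective f ∧ f '' S₁ ⊆ S₂

/-- A figure is good if `A ≤ B` and `B ≤ A` imply `A ≈ B` for every figure `B`. -/
def IsGood (A : Set Plane) : Prop :=
  ∀ B : Set Plane, GeomLe A B → GeomLe B A → GeomEq A B

/-- A figure is strongly good if every surjective isometry mapping it into itself maps it onto itself. -/
def IsStronglyGood (A : Set Plane) : Prop :=
  ∀ f : Plane → Plane, Isometry f → Function.Surjective f → f '' A ⊆ A → f '' A = A

/-- Claim 1: the figure `L` consisting of the closed half-line `{(x,0) : x ≥ 0}`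
together with the point `(0,1)` is strongly good; in fact the only surjective
isometry mapping `L` into itself is the identity. -/
lemma plane_dist_sq (x y : Plane) :
    dist x y ^ 2 = (x 0 - y 0) ^ 2 + (x 1 - y 1) ^ 2 := by
  rw [EuclideanSpace.dist_eq, Real.sq_sqrt (by positivity)]
  simp [Fin.sum_univ_two, Real.dist_eq, sq_abs]

lemma plane_eq (x y : Plane) (h0 : x 0 = y 0) (h1 : x 1 = y 1) : x = y := by
  have h := plane_dist_sq x y
  rw [h0, h1] at h
  simp at h
  exact h

lemma pt_apply0 (x y : ℝ) : (WithLp.toLp 2 ![x, y] : Plane) 0 = x := rfl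
lemma pt_apply1 (x y : ℝ) : (WithLp.toLp 2 ![x, y] : Plane) 1 = y := rfl

lemma convex_ray : Convex ℝ {p : Plane | 0 ≤ p 0 ∧ p 1 = 0} := by
  intro x hx y hy a b ha hb hab
  have h0 : (a • x + b • y) 0 = a * x 0 + b * y 0 := rfl
  have h1 : (a • x + b • y) 1 = a * x 1 + b * y 1 := rfl
  refine ⟨?_, ?_⟩
  · rw [h0]; exact add_nonneg (mul_nonneg ha hx.1) (mul_nonneg hb hy.1)
  · rw [h1, hx.2, hy.2]; ring

theorem halfLine_with_point_stronglyGood :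
    let L : Set Plane := {p | 0 ≤ p 0 ∧ p 1 = 0} ∪ {(WithLp.toLp 2 ![0, 1] : Plane)}
    ∀ f : Plane → Plane, Isometry f → Function.Surjective f → f '' L ⊆ L →
      f = id ∧ f '' L = L := by
  intro L f hf hs hsub
  have hinj := hf.injective
  set R : Set Plane := {p | 0 ≤ p 0 ∧ p 1 = 0} with hRdef
  set q : Plane := (WithLp.toLp 2 ![0, 1] : Plane) with hqdef
  have dsq : ∀ a b : Plane, (f a 0 - f b 0) ^ 2 + (f a 1 - f b 1) ^ 2
      = (a 0 - b 0) ^ 2 + (a 1 - b 1) ^ 2 := by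
    intro a b
    rw [← plane_dist_sq, ← plane_dist_sq, hf.dist_eq]
  have hfRL : ∀ p ∈ R, f p ∈ R ∪ {q} := fun p hp => hsub ⟨p, Or.inl hp, rfl⟩
  have hfqL : f q ∈ R ∪ {q} := hsub ⟨q, Or.inr rfl, rfl⟩
  -- the image of the ray avoids q
  have contProj : Continuous fun p : Plane => p 1 :=
    (EuclideanSpace.proj (1 : Fin 2)).continuous
  have hU : IsOpen {p : Plane | p 1 < (1 : ℝ) / 2} := isOpen_lt contProj continuous_const
  have hV : IsOpen {p : Plane | (1 : ℝ) / 2 < p 1} := isOpen_lt continuous_const contProj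
  have hdisj : Disjoint {p : Plane | p 1 < (1 : ℝ) / 2} {p : Plane | (1 : ℝ) / 2 < p 1} := by
    rw [Set.disjoint_left]
    intro p h1 h2
    have h1' : p 1 < (1:ℝ)/2 := h1
    have h2' : (1:ℝ)/2 < p 1 := h2
    linarith
  have hsuv : f '' R ⊆ {p : Plane | p 1 < (1 : ℝ) / 2} ∪ {p : Plane | (1 : ℝ) / 2 < p 1} := by
    rintro _ ⟨p, hp, rfl⟩
    rcases hfRL p hp with h | h
    · left; show f p 1 < (1 : ℝ) / 2; rw [h.2]; norm_num
    · right; show (1 : ℝ) / 2 < f p 1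
      rw [Set.mem_singleton_iff.mp h, hqdef, pt_apply1]; norm_num
  have hzeroR : (WithLp.toLp 2 ![0, 0] : Plane) ∈ R := ⟨by norm_num [pt_apply0], rfl⟩
  have honeR : (WithLp.toLp 2 ![1, 0] : Plane) ∈ R := ⟨by rw [pt_apply0]; norm_num, rfl⟩
  have htwoR : (WithLp.toLp 2 ![2, 0] : Plane) ∈ R := ⟨by rw [pt_apply0]; norm_num, rfl⟩
  have hsu : (f '' R ∩ {p : Plane | p 1 < (1 : ℝ) / 2}).Nonempty := by
    by_cases h0 : f (WithLp.toLp 2 ![0, 0] : Plane) = q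
    · refine ⟨f (WithLp.toLp 2 ![1, 0] : Plane), ⟨_, honeR, rfl⟩, ?_⟩
      have hne : f (WithLp.toLp 2 ![1, 0] : Plane) ≠ q := by
        intro h1
        have : (WithLp.toLp 2 ![0, 0] : Plane) = (WithLp.toLp 2 ![1, 0] : Plane) := hinj (h0.trans h1.symm)
        have h2 := congrArg (fun p : Plane => p 0) this
        simp only [pt_apply0] at h2
        norm_num at h2
      rcases hfRL _ honeR with h | h
      · show f (WithLp.toLp 2 ![1, 0] : Plane) 1 < (1 : ℝ) / 2; rw [h.2]; norm_num
      · exact absurd (Set.mem_singleton_iff.mp h) hne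
    · refine ⟨f (WithLp.toLp 2 ![0, 0] : Plane), ⟨_, hzeroR, rfl⟩, ?_⟩
      rcases hfRL _ hzeroR with h | h
      · show f (WithLp.toLp 2 ![0, 0] : Plane) 1 < (1 : ℝ) / 2; rw [h.2]; norm_num
      · exact absurd (Set.mem_singleton_iff.mp h) h0
  have hconn : IsPreconnected (f '' R) :=
    (convex_ray.isPreconnected).image f hf.continuous.continuousOn
  have himg : f '' R ⊆ {p : Plane | p 1 < (1 : ℝ) / 2} :=
    hconn.subset_left_of_subset_union hU hV hdisj hsuv hsu
  -- hence f maps R into R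
  have hfRR : ∀ p ∈ R, f p ∈ R := by
    intro p hp
    rcases hfRL p hp with h | h
    · exact h
    · exfalso
      have := himg ⟨p, hp, rfl⟩
      rw [Set.mem_singleton_iff.mp h] at this
      simp only [Set.mem_setOf_eq, hqdef, pt_apply1] at this
      norm_num at this
  -- f q = q
  have hfq : f q = q := by
    rcases hfqL with h | h
    · exfalso
      have ha := hfRR _ hzeroR
      have hb := hfRR _ htwoR
      have e1 := dsq q (WithLp.toLp 2 ![0, 0] : Plane)
      have e2 := dsq q (WithLp.toLp 2 ![2, 0] : Plane)
      have e3 := dsq (WithLp.toLp 2 ![0, 0] : Plane) (WithLp.toLp 2 ![2, 0] : Plane)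
      simp only [hqdef, pt_apply0, pt_apply1, Matrix.cons_val_zero, Matrix.cons_val_one, Matrix.head_cons] at e1 e2 e3
      rw [h.2, ha.2] at e1
      rw [h.2, hb.2] at e2
      rw [ha.2, hb.2] at e3
      nlinarith [e1, e2, e3, sq_nonneg ((f (WithLp.toLp 2 ![0, 1] : Plane) 0 - f (WithLp.toLp 2 ![0, 0] : Plane) 0) * (f (WithLp.toLp 2 ![0, 1] : Plane) 0 - f (WithLp.toLp 2 ![2, 0] : Plane) 0))]
    · exact Set.mem_singleton_iff.mp h
  -- f 0 = 0
  have hf0 : f (WithLp.toLp 2 ![0, 0] : Plane) = (WithLp.toLp 2 ![0, 0] : Plane) := by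
    have ha := hfRR _ hzeroR
    have e1 := dsq (WithLp.toLp 2 ![0, 0] : Plane) q
    rw [hfq] at e1
    simp only [hqdef, pt_apply0, pt_apply1, Matrix.cons_val_zero, Matrix.cons_val_one, Matrix.head_cons] at e1
    rw [ha.2] at e1
    refine plane_eq _ _ ?_ ?_
    · rw [pt_apply0]; nlinarith [e1]
    · rw [pt_apply1]; exact ha.2
  -- f e1 = e1
  have hf1 : f (WithLp.toLp 2 ![1, 0] : Plane) = (WithLp.toLp 2 ![1, 0] : Plane) := by
    have hb := hfRR _ honeR
    have e1 := dsq (WithLp.toLp 2 ![1, 0] : Plane) (WithLp.toLp 2 ![0, 0] : Plane)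
    rw [hf0] at e1
    simp only [pt_apply0, pt_apply1, Matrix.cons_val_zero, Matrix.cons_val_one, Matrix.head_cons] at e1
    rw [hb.2] at e1
    refine plane_eq _ _ ?_ ?_
    · rw [pt_apply0]; nlinarith [e1, hb.1]
    · rw [pt_apply1]; exact hb.2
  have hid : f = id := by
    funext x
    show f x = x
    have e1 := dsq x (WithLp.toLp 2 ![0, 0] : Plane)
    have e2 := dsq x (WithLp.toLp 2 ![1, 0] : Plane)
    have e3 := dsq x q
    rw [hf0] at e1
    rw [hf1] at e2
    rw [hfq] at e3
    simp only [hqdef, pt_apply0, pt_apply1, Matrix.cons_val_zero, Matrix.cons_val_one, Matrix.head_cons] at e1 e2 e3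
    refine plane_eq _ _ ?_ ?_
    · nlinarith [e1, e2]
    · nlinarith [e1, e3]
  exact ⟨hid, by rw [hid, Set.image_id]⟩
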